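/- For the Pareto-Lognormal distribution, F(x)/x^β → c as x → 0⁺ for a positive constant c = e^{−βμ+β²τ²/2}; that is, near zero the PLN CDF behaves like a Pareto (power) law with exponent β. -/

import Mathlib

open MeasureTheory Filter

noncomputable def Phi (x : ℝ) : ℝ :=
  ∫ t in Set.Iic x, (Real.sqrt (2 * Real.pi))⁻¹ * Real.exp (-t ^ 2 / 2)

noncomputable def PhiC (x : ℝ) : ℝ := 1 - Phi x

noncomputable def erf (x : ℝ) : ℝ :=
  (2 / Real.sqrt Real.pi) * ∫ t in (0:ℝ)..x, Real.exp (-t ^ 2)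

noncomputable def erfc (x : ℝ) : ℝ := 1 - erf x


noncomputable def plnPDF (β μ τ x : ℝ) : ℝ :=
  β * x ^ (β - 1) * Real.exp (-β * μ + β ^ 2 * τ ^ 2 / 2) *
    PhiC ((Real.log x - μ + β * τ ^ 2) / τ)

noncomputable def plnCDF (β μ τ x : ℝ) : ℝ :=
  Phi ((Real.log x - μ) / τ) + x ^ β * Real.exp (-β * μ + β ^ 2 * τ ^ 2 / 2) *
    PhiC ((Real.log x - μ + β * τ ^ 2) / τ)

open Set Real

open intervalIntegral in
lemma intervalIntegral_exp_mul (a c y : ℝ) (ha : a ≠ 0) :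
    (∫ t in c..y, Real.exp (a * t)) = (Real.exp (a * y) - Real.exp (a * c)) / a := by
  rw [integral_comp_mul_left Real.exp ha, integral_exp, smul_eq_mul]
  ring

lemma integrableOn_exp_mul_Iic' (a y : ℝ) (ha : 0 < a) :
    IntegrableOn (fun t => Real.exp (a * t)) (Set.Iic y) := by
  refine integrableOn_Iic_of_intervalIntegral_norm_bounded (Real.exp (a * y) / a) y
    (fun c => (by fun_prop : Continuous fun t : ℝ => Real.exp (a * t)).integrableOn_Ioc)
    tendsto_id (eventually_of_mem (Iic_mem_atBot y) fun c hc => ?_)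
  simp only [id_eq, Real.norm_eq_abs, abs_of_pos (Real.exp_pos _)]
  rw [intervalIntegral_exp_mul a c y ha.ne']
  have := (Real.exp_pos (a * c)).le
  have := ha
  rw [div_le_div_iff_of_pos_right ha]
  linarith

lemma integral_exp_mul_Iic' (a y : ℝ) (ha : 0 < a) :
    (∫ t in Set.Iic y, Real.exp (a * t)) = Real.exp (a * y) / a := by
  refine tendsto_nhds_unique
    (intervalIntegral_tendsto_integral_Iic _ (integrableOn_exp_mul_Iic' a y ha) tendsto_id) ?_
  simp_rw [fun c => intervalIntegral_exp_mul a c y ha.ne']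
  have : Tendsto (fun c : ℝ => (Real.exp (a * y) - Real.exp (a * c)) / a) atBot
      (nhds ((Real.exp (a * y) - 0) / a)) := by
    apply Tendsto.div_const
    apply Tendsto.const_sub
    exact Real.tendsto_exp_atBot.comp (tendsto_const_nhds.pos_mul_atBot ha tendsto_id)
  simpa using this


lemma Phi_nonneg (y : ℝ) : 0 ≤ Phi y := by
  apply setIntegral_nonneg measurableSet_Iic
  intro t _
  positivity

lemma gauss_integrableOn (y : ℝ) :
    IntegrableOn (fun t : ℝ => (Real.sqrt (2 * Real.pi))⁻¹ * Real.exp (-t ^ 2 / 2))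
      (Set.Iic y) := by
  have h := (integrable_exp_neg_mul_sq (by norm_num : (0:ℝ) < 1/2)).const_mul
    ((Real.sqrt (2 * Real.pi))⁻¹)
  have heq : ∀ t : ℝ, -t ^ 2 / 2 = -(1/2) * t ^ 2 := fun t => by ring
  simp_rw [heq]
  exact Integrable.integrableOn h

lemma Phi_le (a y : ℝ) (ha : 0 < a) (hy : y ≤ -(2*a)) :
    Phi y ≤ (Real.sqrt (2 * Real.pi))⁻¹ * (Real.exp (a * y) / a) := by
  have h1 : Phi y ≤ ∫ t in Set.Iic y, (Real.sqrt (2 * Real.pi))⁻¹ * Real.exp (a * t) := by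
    apply setIntegral_mono_on (gauss_integrableOn y)
      (((integrableOn_exp_mul_Iic' a y ha).const_mul _)) measurableSet_Iic
    intro t ht
    have ht' : t ≤ -(2*a) := le_trans ht hy
    have : -t ^ 2 / 2 ≤ a * t := by nlinarith
    have := Real.exp_le_exp.mpr this
    have hc : (0:ℝ) ≤ (Real.sqrt (2 * Real.pi))⁻¹ := by positivity
    exact mul_le_mul_of_nonneg_left (Real.exp_le_exp.mpr ‹-t ^ 2 / 2 ≤ a * t›) hc
  rw [MeasureTheory.integral_const_mul, integral_exp_mul_Iic' a y ha] at h1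
  exact h1

lemma key_tendsto (k : ℝ) (hk : 0 ≤ k) :
    Tendsto (fun y => Phi y * Real.exp (-k * y)) atBot (nhds 0) := by
  set a := k + 1 with ha_def
  have ha : 0 < a := by positivity
  set C := (Real.sqrt (2 * Real.pi))⁻¹ / a with hC
  apply tendsto_of_tendsto_of_tendsto_of_le_of_le'
    (g := fun _ : ℝ => (0:ℝ)) (h := fun y => C * Real.exp y)
  · exact tendsto_const_nhds
  · have := Real.tendsto_exp_atBot.const_mul C
    simpa using this
  · filter_upwards with y
    have := Phi_nonneg y
    positivity
  · filter_upwards [eventually_le_atBot (-(2*a))] with y hy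
    have h1 := Phi_le a y ha hy
    have h2 : Phi y * Real.exp (-k * y) ≤
        (Real.sqrt (2 * Real.pi))⁻¹ * (Real.exp (a * y) / a) * Real.exp (-k * y) :=
      mul_le_mul_of_nonneg_right h1 (Real.exp_pos _).le
    calc Phi y * Real.exp (-k * y) ≤ _ := h2
      _ = C * (Real.exp (a * y) * Real.exp (-k * y)) := by rw [hC]; ring
      _ = C * Real.exp y := by
          rw [← Real.exp_add]
          congr 1
          rw [ha_def]; ring

lemma Phi_tendsto_atBot : Tendsto Phi atBot (nhds 0) := by
  have := key_tendsto 0 le_rfl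
  simpa using this

lemma PhiC_tendsto_atBot : Tendsto PhiC atBot (nhds 1) := by
  have := Phi_tendsto_atBot.const_sub 1
  exact (by simpa using this : Tendsto (fun x => 1 - Phi x) atBot (nhds 1))

theorem plnCDF_pareto_near_zero (β μ τ : ℝ) (hβ : 0 < β) (hτ : 0 < τ) :
    Tendsto (fun x : ℝ => plnCDF β μ τ x / x ^ β) (nhdsWithin 0 (Set.Ioi 0))
        (nhds (Real.exp (-β * μ + β ^ 2 * τ ^ 2 / 2))) ∧
    0 < Real.exp (-β * μ + β ^ 2 * τ ^ 2 / 2) := by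
  refine ⟨?_, Real.exp_pos _⟩
  set c := Real.exp (-β * μ + β ^ 2 * τ ^ 2 / 2) with hc
  -- the two inner arguments tend to atBot
  have hy : Tendsto (fun x : ℝ => (Real.log x - μ) / τ) (nhdsWithin 0 (Set.Ioi 0)) atBot := by
    apply Tendsto.atBot_div_const hτ
    exact tendsto_atBot_add_const_right _ (-μ) Real.tendsto_log_nhdsGT_zero
  have hz : Tendsto (fun x : ℝ => (Real.log x - μ + β * τ ^ 2) / τ)
      (nhdsWithin 0 (Set.Ioi 0)) atBot := by
    apply Tendsto.atBot_div_const hτ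
    exact tendsto_atBot_add_const_right _ (β * τ ^ 2)
      (tendsto_atBot_add_const_right _ (-μ) Real.tendsto_log_nhdsGT_zero)
  -- second term tends to c
  have h2 : Tendsto (fun x : ℝ => c * PhiC ((Real.log x - μ + β * τ ^ 2) / τ))
      (nhdsWithin 0 (Set.Ioi 0)) (nhds (c * 1)) :=
    (PhiC_tendsto_atBot.comp hz).const_mul c
  -- first term tends to 0
  have h1 : Tendsto (fun x : ℝ =>
      Real.exp (-β * μ) * (Phi ((Real.log x - μ) / τ) *
        Real.exp (-(β * τ) * ((Real.log x - μ) / τ))))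
      (nhdsWithin 0 (Set.Ioi 0)) (nhds (Real.exp (-β * μ) * 0)) :=
    ((key_tendsto (β * τ) (by positivity)).comp hy).const_mul _
  have hsum := h1.add h2
  have heq : ∀ᶠ x in nhdsWithin 0 (Set.Ioi 0),
      Real.exp (-β * μ) * (Phi ((Real.log x - μ) / τ) *
        Real.exp (-(β * τ) * ((Real.log x - μ) / τ)))
      + c * PhiC ((Real.log x - μ + β * τ ^ 2) / τ)
      = plnCDF β μ τ x / x ^ β := by
    filter_upwards [self_mem_nhdsWithin] with x hx
    have hx : (0:ℝ) < x := hx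
    have hxb : (0:ℝ) < x ^ β := Real.rpow_pos_of_pos hx β
    have hxβ : x ^ β = Real.exp (Real.log x * β) := Real.rpow_def_of_pos hx β
    have hkey : Real.exp (-β * μ) * Real.exp (-(β * τ) * ((Real.log x - μ) / τ)) * x ^ β = 1 := by
      rw [hxβ, ← Real.exp_add, ← Real.exp_add,
        show -β * μ + -(β * τ) * ((Real.log x - μ) / τ) + Real.log x * β = 0 from by
          field_simp
          ring]
      exact Real.exp_zero
    rw [plnCDF, eq_div_iff hxb.ne']
    linear_combination Phi ((Real.log x - μ) / τ) * hkey
  have := hsum.congr' heq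
  simpa using this
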